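/- Let Z_1, ..., Z_n be i.i.d. random variables taking values in a measurable space, let C_1, ..., C_K be a measurable partition with probabilities p_i = P(Z_1 ∈ C_i), and let N_i = #{j : Z_j ∈ C_i}. Then for every λ > 0, P( Σ_{i=1}^K |N_i/n - p_i| ≥ λ ) ≤ 2^K · exp(-n λ² / 2). -/

import Mathlib

open MeasureTheory ProbabilityTheory Classical

noncomputable section

section BHCAux

open Real

lemma bhc_Dpos {q : ℝ} (hq0 : 0 ≤ q) (hq1 : q ≤ 1) (s : ℝ) : 0 < 1 - q + q * Real.exp s := by
  rcases eq_or_lt_of_le hq0 with h | h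
  · simp [← h]
  · have : 0 < q * Real.exp s := mul_pos h (exp_pos s)
    linarith

lemma bhc_log_le {q : ℝ} (hq0 : 0 ≤ q) (hq1 : q ≤ 1) {t : ℝ} (ht : 0 ≤ t) :
    Real.log (1 - q + q * Real.exp t) ≤ q * t + t ^ 2 / 8 := by
  set D : ℝ → ℝ := fun s => 1 - q + q * Real.exp s with hDdef
  have hD : ∀ s, 0 < D s := fun s => bhc_Dpos hq0 hq1 s
  have hDderiv : ∀ s, HasDerivAt D (q * Real.exp s) s := by
    intro s
    exact ((Real.hasDerivAt_exp s).const_mul q).const_add (1 - q)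
  set h : ℝ → ℝ := fun s => q * s + s ^ 2 / 8 - Real.log (D s) with hhdef
  set h' : ℝ → ℝ := fun s => q + s / 4 - q * Real.exp s / D s with hh'def
  have hhderiv : ∀ s, HasDerivAt h (h' s) s := by
    intro s
    have h2 : HasDerivAt (fun x : ℝ => q * x) q s := by simpa using (hasDerivAt_id s).const_mul q
    have h1 : HasDerivAt (fun s : ℝ => q * s + s ^ 2 / 8) (q + s * 2 / 8) s := by
      exact (by simpa [mul_comm] using h2.add ((hasDerivAt_pow 2 s).div_const 8) :
        HasDerivAt ((fun x : ℝ => q * x) + fun x => x ^ 2 / 8) (q + s * 2 / 8) s)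
    have h3 : HasDerivAt (fun s => Real.log (D s)) (q * Real.exp s / D s) s :=
      (hDderiv s).log (hD s).ne'
    have : HasDerivAt (fun x => q * x + x ^ 2 / 8 - Real.log (D x)) _ s := h1.sub h3
    convert this using 1
    simp only [h']
    ring
  have hh'deriv : ∀ s,
      HasDerivAt h' (1/4 - (q * Real.exp s / D s) * (1 - q * Real.exp s / D s)) s := by
    intro s
    have h1 : HasDerivAt (fun s : ℝ => q + s / 4) (1/4) s := by
      simpa using ((hasDerivAt_id s).div_const 4).const_add q
    have h2 : HasDerivAt (fun s => q * Real.exp s / D s)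
        ((q * Real.exp s * D s - q * Real.exp s * (q * Real.exp s)) / (D s) ^ 2) s :=
      ((Real.hasDerivAt_exp s).const_mul q).div (hDderiv s) (hD s).ne'
    have : HasDerivAt (fun x => q + x / 4 - q * Real.exp x / D x) _ s := h1.sub h2
    convert this using 1
    have hDs := (hD s).ne'
    field_simp
  have hmono' : Monotone h' := by
    apply monotone_of_deriv_nonneg (fun s => (hh'deriv s).differentiableAt)
    intro s
    rw [(hh'deriv s).deriv]
    set u := q * Real.exp s / D s
    nlinarith [sq_nonneg (1 - 2 * u)]
  have hh'0 : h' 0 = 0 := by simp [h', D]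
  have hmono : MonotoneOn h (Set.Ici 0) := by
    apply monotoneOn_of_deriv_nonneg (convex_Ici 0)
    · exact continuous_iff_continuousAt.2
        (fun x => (hhderiv x).differentiableAt.continuousAt) |>.continuousOn
    · exact fun x _ => (hhderiv x).differentiableAt.differentiableWithinAt
    · intro x hx
      rw [(hhderiv x).deriv, ← hh'0]
      exact hmono' (le_of_lt (by simpa using hx))
  have h0 : h 0 = 0 := by simp [h, D]
  have := hmono (Set.self_mem_Ici) (Set.mem_Ici.2 ht) ht
  rw [h0] at this
  simp only [h] at this
  linarith

lemma bhc_mgf_le_nonneg {q : ℝ} (hq0 : 0 ≤ q) (hq1 : q ≤ 1) {t : ℝ} (ht : 0 ≤ t) :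
    (1 - q) * Real.exp (-(t * q)) + q * Real.exp (t * (1 - q)) ≤ Real.exp (t ^ 2 / 8) := by
  have hD := bhc_Dpos hq0 hq1 t
  have hle := (Real.log_le_iff_le_exp hD).1 (bhc_log_le hq0 hq1 ht)
  have e1 : Real.exp (-(t * q)) = Real.exp (-(q * t)) := by rw [mul_comm]
  have e2 : Real.exp (t * (1 - q)) = Real.exp (-(q * t)) * Real.exp t := by
    rw [← Real.exp_add]; ring_nf
  rw [e1, e2]
  have e3 : Real.exp (-(q*t)) * Real.exp (q * t + t ^ 2 / 8) = Real.exp (t ^ 2 / 8) := by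
    rw [← Real.exp_add]; ring_nf
  calc (1 - q) * Real.exp (-(q*t)) + q * (Real.exp (-(q*t)) * Real.exp t)
      = Real.exp (-(q*t)) * (1 - q + q * Real.exp t) := by ring
    _ ≤ Real.exp (-(q*t)) * Real.exp (q * t + t ^ 2 / 8) :=
        mul_le_mul_of_nonneg_left hle (exp_pos _).le
    _ = Real.exp (t ^ 2 / 8) := e3

lemma bhc_mgf_le {q : ℝ} (hq0 : 0 ≤ q) (hq1 : q ≤ 1) (t : ℝ) :
    (1 - q) * Real.exp (-(t * q)) + q * Real.exp (t * (1 - q)) ≤ Real.exp (t ^ 2 / 8) := by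
  rcases le_total 0 t with ht | ht
  · exact bhc_mgf_le_nonneg hq0 hq1 ht
  · have key := bhc_mgf_le_nonneg (q := 1 - q) (by linarith) (by linarith) (t := -t) (by linarith)
    have e1 : -(-t * (1 - q)) = t * (1 - q) := by ring
    have e2 : -t * (1 - (1 - q)) = -(t * q) := by ring
    have e3 : (-t) ^ 2 = t ^ 2 := by ring
    rw [e1, e2, e3] at key
    linarith

lemma bhc_chernoff_subset {α : Type*} [MeasurableSpace α]
    (ν : Measure α) [IsProbabilityMeasure ν]
    {Ω : Type*} [MeasurableSpace Ω] (P : Measure Ω) [IsProbabilityMeasure P]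
    (n : ℕ) (Z : ℕ → Ω → α) (hmeas : ∀ j, Measurable (Z j))
    (hindep : iIndepFun Z P)
    (hlaw : ∀ j, Measure.map (Z j) P = ν)
    (U : Set α) (hU : MeasurableSet U) (lam : ℝ) (hlam : 0 < lam) :
    P {ω | (n : ℝ) * lam / 2 ≤
        ∑ j ∈ Finset.range n, (Set.indicator U (fun _ => (1:ℝ)) (Z j ω) - (ν U).toReal)}
      ≤ ENNReal.ofReal (Real.exp (-(n : ℝ) * lam ^ 2 / 2)) := by
  set q : ℝ := (ν U).toReal with hqdef
  have hq0 : 0 ≤ q := ENNReal.toReal_nonneg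
  have hq1 : q ≤ 1 := by
    rw [hqdef]
    exact ENNReal.toReal_le_of_le_ofReal one_pos.le (by simpa using prob_le_one)
  set φ : α → ℝ := fun a => Set.indicator U (fun _ => (1:ℝ)) a - q with hφdef
  have hφmeas : Measurable φ := (measurable_const.indicator hU).sub measurable_const
  set X : ℕ → Ω → ℝ := fun j => φ ∘ Z j with hXdef
  have hXmeas : ∀ j, Measurable (X j) := fun j => hφmeas.comp (hmeas j)
  have hXindep : iIndepFun X P :=
    hindep.comp _ (fun _ => hφmeas)
  set t : ℝ := 2 * lam with htdef
  have ht : 0 ≤ t := by positivity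
  have hφbdd : ∀ a, |φ a| ≤ 1 := by
    intro a
    rw [abs_le]
    by_cases h : a ∈ U <;> simp [φ, Set.indicator_apply, h] <;> constructor <;> linarith
  have hXint : ∀ j, Integrable (fun ω => Real.exp (t * X j ω)) P := by
    intro j
    refine (integrable_const (Real.exp |t|)).mono'
      (((hXmeas j).const_mul t).exp.aestronglyMeasurable) (ae_of_all _ fun ω => ?_)
    rw [Real.norm_eq_abs, abs_of_pos (exp_pos _), Real.exp_le_exp]
    calc t * X j ω ≤ |t * X j ω| := le_abs_self _
      _ = |t| * |X j ω| := abs_mul _ _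
      _ ≤ |t| * 1 := by
          apply mul_le_mul_of_nonneg_left (hφbdd _) (abs_nonneg _)
      _ = |t| := mul_one _
  have hmgf : ∀ j, mgf (X j) P t ≤ Real.exp (t ^ 2 / 8) := by
    intro j
    have hmap : mgf (X j) P t = ∫ a, Real.exp (t * φ a) ∂ν := by
      rw [mgf, ← hlaw j, integral_map (hmeas j).aemeasurable
        ((hφmeas.const_mul t).exp.aestronglyMeasurable)]
      rfl
    have hsplit : ∀ a, Real.exp (t * φ a) =
        Set.indicator U (fun _ => Real.exp (t * (1 - q))) a +
         Set.indicator Uᶜ (fun _ => Real.exp (-(t * q))) a := by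
      intro a
      by_cases h : a ∈ U <;>
        simp [φ, Set.indicator_apply, h, mul_sub, mul_one]
    have hint1 : ∫ a, Real.exp (t * φ a) ∂ν
        = (ν U).toReal * Real.exp (t * (1 - q)) + (ν Uᶜ).toReal * Real.exp (-(t * q)) := by
      simp only [hsplit]
      rw [integral_add ((integrable_const _).indicator hU)
        ((integrable_const _).indicator hU.compl)]
      rw [integral_indicator_const _ hU, integral_indicator_const _ hU.compl]
      simp [smul_eq_mul, mul_comm, measureReal_def]
    have hcompl : (ν Uᶜ).toReal = 1 - q := by
      rw [prob_compl_eq_one_sub hU]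
      rw [ENNReal.toReal_sub_of_le (by simpa using prob_le_one) (by simp)]
      simp [hqdef]
    rw [hmap, hint1, hcompl, ← hqdef]
    have := bhc_mgf_le hq0 hq1 t
    linarith
  set S : Ω → ℝ := fun ω => ∑ j ∈ Finset.range n, X j ω with hSdef
  have hSsum : S = ∑ j ∈ Finset.range n, X j := by
    funext ω; simp [S]
  have hSint : Integrable (fun ω => Real.exp (t * S ω)) P := by
    rw [hSsum]
    exact hXindep.integrable_exp_mul_sum hXmeas (fun j _ => hXint j)
  have hmgfS : mgf S P t ≤ Real.exp ((n : ℝ) * t ^ 2 / 8) := by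
    rw [hSsum, hXindep.mgf_sum hXmeas]
    calc ∏ j ∈ Finset.range n, mgf (X j) P t
        ≤ ∏ j ∈ Finset.range n, Real.exp (t ^ 2 / 8) :=
          Finset.prod_le_prod (fun j _ => mgf_nonneg) (fun j _ => hmgf j)
      _ = Real.exp ((n : ℝ) * t ^ 2 / 8) := by
          rw [Finset.prod_const, Finset.card_range, ← Real.exp_nat_mul]
          ring_nf
  have hcher := measure_ge_le_exp_mul_mgf (X := S) (μ := P) ((n : ℝ) * lam / 2) ht hSint
  have hbound : Real.exp (-t * ((n : ℝ) * lam / 2)) * mgf S P t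
      ≤ Real.exp (-(n : ℝ) * lam ^ 2 / 2) := by
    calc Real.exp (-t * ((n : ℝ) * lam / 2)) * mgf S P t
        ≤ Real.exp (-t * ((n : ℝ) * lam / 2)) * Real.exp ((n : ℝ) * t ^ 2 / 8) :=
          mul_le_mul_of_nonneg_left hmgfS (exp_pos _).le
      _ = Real.exp (-(n : ℝ) * lam ^ 2 / 2) := by
          rw [← Real.exp_add]; congr 1; simp only [t]; ring
  have hfin : P {ω | (n : ℝ) * lam / 2 ≤ S ω} ≠ ⊤ := measure_ne_top _ _
  calc P {ω | (n : ℝ) * lam / 2 ≤ S ω}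
      = ENNReal.ofReal ((P {ω | (n : ℝ) * lam / 2 ≤ S ω}).toReal) :=
        (ENNReal.ofReal_toReal hfin).symm
    _ ≤ ENNReal.ofReal (Real.exp (-(n : ℝ) * lam ^ 2 / 2)) :=
        ENNReal.ofReal_le_ofReal (le_trans hcher hbound)

end BHCAux

theorem stmt7 {α : Type*} [MeasurableSpace α]
    (ν : Measure α) [IsProbabilityMeasure ν]
    {Ω : Type*} [MeasurableSpace Ω] (P : Measure Ω) [IsProbabilityMeasure P]
    (n K : ℕ) (Z : ℕ → Ω → α) (hmeas : ∀ j, Measurable (Z j))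
    (hindep : iIndepFun Z P)
    (hlaw : ∀ j, Measure.map (Z j) P = ν)
    (C : Fin K → Set α) (hC : ∀ i, MeasurableSet (C i))
    (hdisj : Pairwise fun i j => Disjoint (C i) (C j))
    (hcover : (⋃ i, C i) = Set.univ)
    (p : Fin K → ℝ) (hp : ∀ i, p i = (ν (C i)).toReal)
    (N : Fin K → Ω → ℕ)
    (hN : ∀ i ω, (N i ω : ℕ) = ((Finset.range n).filter fun j => decide (Z j ω ∈ C i) = true).card)
    (lam : ℝ) (hlam : 0 < lam) :
    P {ω | lam ≤ ∑ i : Fin K, |(N i ω : ℝ) / n - p i|}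
      ≤ ENNReal.ofReal (2 ^ K * Real.exp (-(n : ℝ) * lam ^ 2 / 2)) := by
  have h2K : (1:ℝ) ≤ 2 ^ K := one_le_pow₀ (by norm_num)
  rcases Nat.eq_zero_or_pos n with hn | hn
  · subst hn
    refine le_trans prob_le_one ?_
    rw [← ENNReal.ofReal_one]
    apply ENNReal.ofReal_le_ofReal
    norm_num
    linarith
  have hn' : (0:ℝ) < n := by exact_mod_cast hn
  -- basic facts
  have hone : ∀ a : α, ∑ i : Fin K, Set.indicator (C i) (fun _ => (1:ℝ)) a = 1 := by
    intro a
    have ha : a ∈ ⋃ i, C i := by rw [hcover]; trivial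
    obtain ⟨i, hi⟩ := Set.mem_iUnion.1 ha
    rw [Finset.sum_eq_single_of_mem i (Finset.mem_univ i)]
    · simp [Set.indicator_apply, hi]
    · intro j _ hji
      have : a ∉ C j := fun haj => Set.disjoint_left.1 (hdisj hji) haj hi
      simp [Set.indicator_apply, this]
  have hNval : ∀ i ω, (N i ω : ℝ)
      = ∑ j ∈ Finset.range n, Set.indicator (C i) (fun _ => (1:ℝ)) (Z j ω) := by
    intro i ω
    rw [hN i ω, Finset.card_filter]
    push_cast
    congr 1
    funext j
    by_cases h : Z j ω ∈ C i <;> simp [Set.indicator_apply, h]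
  have hsumN : ∀ ω, ∑ i : Fin K, (N i ω : ℝ) = n := by
    intro ω
    simp only [hNval]
    rw [Finset.sum_comm]
    simp [hone]
  have hsump : ∑ i : Fin K, p i = 1 := by
    have h1 : ν (⋃ i, C i) = ∑' i, ν (C i) := measure_iUnion hdisj hC
    rw [hcover, measure_univ, tsum_fintype] at h1
    have h2 : (∑ i : Fin K, ν (C i)).toReal = ∑ i : Fin K, (ν (C i)).toReal :=
      ENNReal.toReal_sum (fun i _ => measure_ne_top _ _)
    simp only [hp]
    rw [← h2, ← h1]
    simp
  have hq : ∀ A : Finset (Fin K), (ν (⋃ i ∈ A, C i)).toReal = ∑ i ∈ A, p i := by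
    intro A
    rw [measure_biUnion_finset (fun i _ j _ hij => hdisj hij) (fun i _ => hC i)]
    rw [ENNReal.toReal_sum (fun i _ => measure_ne_top _ _)]
    exact Finset.sum_congr rfl (fun i _ => (hp i).symm)
  have hindU : ∀ (A : Finset (Fin K)) (a : α),
      Set.indicator (⋃ i ∈ A, C i) (fun _ => (1:ℝ)) a
        = ∑ i ∈ A, Set.indicator (C i) (fun _ => (1:ℝ)) a := by
    intro A a
    by_cases h : a ∈ ⋃ i ∈ A, C i
    · obtain ⟨i, hiA, hai⟩ := Set.mem_iUnion₂.1 h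
      rw [Set.indicator_of_mem h, Finset.sum_eq_single_of_mem i hiA]
      · simp [Set.indicator_apply, hai]
      · intro j _ hji
        have : a ∉ C j := fun haj => Set.disjoint_left.1 (hdisj hji) haj hai
        simp [Set.indicator_apply, this]
    · rw [Set.indicator_of_notMem h]
      symm
      apply Finset.sum_eq_zero
      intro i hiA
      have : a ∉ C i := fun hai => h (Set.mem_iUnion₂.2 ⟨i, hiA, hai⟩)
      simp [Set.indicator_apply, this]
  -- the union bound inclusion
  have hincl : {ω | lam ≤ ∑ i : Fin K, |(N i ω : ℝ) / n - p i|}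
      ⊆ ⋃ A : Finset (Fin K), {ω | (n : ℝ) * lam / 2 ≤
          ∑ j ∈ Finset.range n, (Set.indicator (⋃ i ∈ A, C i) (fun _ => (1:ℝ)) (Z j ω)
            - (ν (⋃ i ∈ A, C i)).toReal)} := by
    intro ω hω
    simp only [Set.mem_setOf_eq] at hω
    set x : Fin K → ℝ := fun i => (N i ω : ℝ) / n - p i with hxdef
    set A : Finset (Fin K) := Finset.univ.filter (fun i => 0 ≤ x i) with hAdef
    refine Set.mem_iUnion.2 ⟨A, ?_⟩
    simp only [Set.mem_setOf_eq]
    have hRHS : ∑ j ∈ Finset.range n, (Set.indicator (⋃ i ∈ A, C i) (fun _ => (1:ℝ)) (Z j ω)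
        - (ν (⋃ i ∈ A, C i)).toReal) = (n : ℝ) * ∑ i ∈ A, x i := by
      rw [Finset.sum_sub_distrib, Finset.sum_const, Finset.card_range, hq]
      have : ∑ j ∈ Finset.range n, Set.indicator (⋃ i ∈ A, C i) (fun _ => (1:ℝ)) (Z j ω)
          = ∑ i ∈ A, (N i ω : ℝ) := by
        simp only [hindU]
        rw [Finset.sum_comm]
        exact Finset.sum_congr rfl (fun i _ => (hNval i ω).symm)
      rw [this, nsmul_eq_mul, Finset.mul_sum, Finset.mul_sum, ← Finset.sum_sub_distrib]
      refine Finset.sum_congr rfl (fun i _ => ?_)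
      simp only [x]
      field_simp
    have hzero : ∑ i : Fin K, x i = 0 := by
      simp only [x]
      rw [Finset.sum_sub_distrib, hsump]
      rw [← Finset.sum_div, hsumN]
      field_simp
      norm_num
    have hsplit := Finset.sum_filter_add_sum_filter_not Finset.univ (fun i => 0 ≤ x i) x
    have habs : ∑ i : Fin K, |x i|
        = ∑ i ∈ A, x i - ∑ i ∈ Finset.univ.filter (fun i => ¬ 0 ≤ x i), x i := by
      rw [← Finset.sum_filter_add_sum_filter_not Finset.univ (fun i => 0 ≤ x i) (fun i => |x i|)]
      congr 1
      · exact Finset.sum_congr rfl (fun i hi => abs_of_nonneg (Finset.mem_filter.1 hi).2)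
      · rw [← Finset.sum_neg_distrib]
        exact Finset.sum_congr rfl (fun i hi =>
          abs_of_neg (lt_of_not_ge (Finset.mem_filter.1 hi).2))
    have hT : lam / 2 ≤ ∑ i ∈ A, x i := by
      have h1 : ∑ i ∈ A, x i + ∑ i ∈ Finset.univ.filter (fun i => ¬ 0 ≤ x i), x i = 0 := by
        rw [hsplit]; exact hzero
      have h2 : lam ≤ ∑ i : Fin K, |x i| := hω
      rw [habs] at h2
      linarith
    rw [hRHS]
    calc (n:ℝ) * lam / 2 = (n:ℝ) * (lam / 2) := by ring
      _ ≤ (n:ℝ) * ∑ i ∈ A, x i := by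
          apply mul_le_mul_of_nonneg_left hT hn'.le
  -- union bound + Chernoff
  calc P {ω | lam ≤ ∑ i : Fin K, |(N i ω : ℝ) / n - p i|}
      ≤ P (⋃ A : Finset (Fin K), {ω | (n : ℝ) * lam / 2 ≤
          ∑ j ∈ Finset.range n, (Set.indicator (⋃ i ∈ A, C i) (fun _ => (1:ℝ)) (Z j ω)
            - (ν (⋃ i ∈ A, C i)).toReal)}) := measure_mono hincl
    _ ≤ ∑' A : Finset (Fin K), P {ω | (n : ℝ) * lam / 2 ≤
          ∑ j ∈ Finset.range n, (Set.indicator (⋃ i ∈ A, C i) (fun _ => (1:ℝ)) (Z j ω)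
            - (ν (⋃ i ∈ A, C i)).toReal)} := measure_iUnion_le _
    _ = ∑ A : Finset (Fin K), P {ω | (n : ℝ) * lam / 2 ≤
          ∑ j ∈ Finset.range n, (Set.indicator (⋃ i ∈ A, C i) (fun _ => (1:ℝ)) (Z j ω)
            - (ν (⋃ i ∈ A, C i)).toReal)} := tsum_fintype _
    _ ≤ ∑ A : Finset (Fin K), ENNReal.ofReal (Real.exp (-(n : ℝ) * lam ^ 2 / 2)) := by
        apply Finset.sum_le_sum
        intro A _
        exact bhc_chernoff_subset ν P n Z hmeas hindep hlaw _
          (A.measurableSet_biUnion (fun i _ => hC i)) lam hlam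
    _ = (2 ^ K : ℕ) * ENNReal.ofReal (Real.exp (-(n : ℝ) * lam ^ 2 / 2)) := by
        rw [Finset.sum_const, Finset.card_univ, Fintype.card_finset, Fintype.card_fin,
          nsmul_eq_mul]
    _ = ENNReal.ofReal (2 ^ K * Real.exp (-(n : ℝ) * lam ^ 2 / 2)) := by
        rw [ENNReal.ofReal_mul (by positivity)]
        congr 1
        rw [ENNReal.ofReal_pow (by norm_num : (0:ℝ) ≤ 2)]
        norm_num
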